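/- Let F_q have characteristic greater than 3 and let e in F_q be such that T^2 + T + e is irreducible over F_q. Then the number of pairs (r, s) in F_q × F_q satisfying r^2(4e-1) + r(4s^3 e^2 - 6s^2 e - 4se + 4s - 2) + (-s^4 e^2 + 6s^2 e - 4s + 3) = 0 is exactly q - 1. -/

import Mathlib

open Polynomial in
/-- Over a finite field `F` with `q` elements, characteristic greater than 3, if
`T² + T + e` is irreducible over `F`, then the number of pairs `(r, s)` satisfying the
Cayley equation `H₂(r,s) = 0` for the pencil of intersection type (2,1,1) is exactly
`q - 1`. -/
theorem stmt_5 (q : ℕ) (F : Type*) [Field F] [Fintype F]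
    (hcard : Fintype.card F = q) (hchar : 3 < ringChar F) (e : F)
    (hirr : Irreducible (X ^ 2 + X + C e : F[X])) :
    Nat.card {p : F × F //
      p.1 ^ 2 * (4 * e - 1) +
        p.1 * (4 * p.2 ^ 3 * e ^ 2 - 6 * p.2 ^ 2 * e - 4 * p.2 * e + 4 * p.2 - 2) +
        (-p.2 ^ 4 * e ^ 2 + 6 * p.2 ^ 2 * e - 4 * p.2 + 3) = 0} = q - 1 := by
  -- characteristic facts
  classical
  have hsmall : ∀ n : ℕ, 0 < n → n < 4 → (n : F) ≠ 0 := by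
    intro n hn hn4 h
    have hdvd := (CharP.cast_eq_zero_iff F (ringChar F) n).mp h
    have := Nat.le_of_dvd hn hdvd
    omega
  have h2 : (2 : F) ≠ 0 := by exact_mod_cast hsmall 2 (by norm_num) (by norm_num)
  have h3 : (3 : F) ≠ 0 := by exact_mod_cast hsmall 3 (by norm_num) (by norm_num)
  have h4 : (4 : F) ≠ 0 := by
    have h44 : (4 : F) = 2 * 2 := by norm_num
    rw [h44]; exact mul_ne_zero h2 h2
  -- 1 - 4e is not a square
  have hns : ∀ u : F, u ^ 2 ≠ 1 - 4 * e := by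
    intro u hu
    set t : F := (u - 1) / 2 with ht
    have hroot : t ^ 2 + t + e = 0 := by
      have h4t : 4 * (t ^ 2 + t + e) = 0 := by
        rw [ht]
        field_simp
        linear_combination 4 * hu
      rcases mul_eq_zero.mp h4t with h | h
      · exact absurd h h4
      · exact h
    have he2 : e = -t - t ^ 2 := by linear_combination hroot
    have hfac : (X ^ 2 + X + C e : F[X]) = (X - C t) * (X - C (-1 - t)) := by
      rw [he2]
      simp only [map_sub, map_neg, map_pow, map_one]
      ring
    rcases hirr.isUnit_or_isUnit hfac with h | h <;>
    · have hdeg := Polynomial.degree_eq_zero_of_isUnit h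
      rw [Polynomial.degree_X_sub_C] at hdeg
      exact one_ne_zero hdeg
  have h14 : (1 : F) - 4 * e ≠ 0 := fun h => hns 0 (by linear_combination -h)
  have hA : 4 * e - 1 ≠ 0 := fun h => h14 (by linear_combination -h)
  have he : e ≠ 0 := by
    intro h
    exact hns 1 (by rw [h]; norm_num)
  have hc : (3 : F) - 12 * e ≠ 0 := by
    have h312 : (3 : F) - 12 * e = 3 * (1 - 4 * e) := by ring
    rw [h312]; exact mul_ne_zero h3 h14
  have hd : ∀ s : F, e * s ^ 2 - s + 1 ≠ 0 := by
    intro s h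
    exact hns (2 * e * s - 1) (by linear_combination 4 * e * h)
  have h4A : (4 : F) * (4 * e - 1) ≠ 0 := mul_ne_zero h4 hA
  have h2A : (2 : F) * (4 * e - 1) ≠ 0 := mul_ne_zero h2 hA
  have h4e : (4 : F) * e ≠ 0 := mul_ne_zero h4 he
  -- Step 1: complete the square in r
  have E1 : {p : F × F //
      p.1 ^ 2 * (4 * e - 1) +
        p.1 * (4 * p.2 ^ 3 * e ^ 2 - 6 * p.2 ^ 2 * e - 4 * p.2 * e + 4 * p.2 - 2) +
        (-p.2 ^ 4 * e ^ 2 + 6 * p.2 ^ 2 * e - 4 * p.2 + 3) = 0} ≃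
      {p : F × F // p.1 ^ 2 =
        16 * (e * p.2 ^ 2 - p.2 + 1) ^ 2 * (e ^ 2 * p.2 ^ 2 - e * p.2 + (1 - 3 * e))} := by
    refine Equiv.subtypeEquiv
      ⟨fun p => (2 * (4 * e - 1) * p.1 +
          (4 * p.2 ^ 3 * e ^ 2 - 6 * p.2 ^ 2 * e - 4 * p.2 * e + 4 * p.2 - 2), p.2),
       fun p => ((p.1 - (4 * p.2 ^ 3 * e ^ 2 - 6 * p.2 ^ 2 * e - 4 * p.2 * e + 4 * p.2 - 2)) /
          (2 * (4 * e - 1)), p.2),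
       fun p => ?_, fun p => ?_⟩ (fun p => ?_)
    · obtain ⟨r, s⟩ := p
      simp only [Prod.mk.injEq]
      refine ⟨?_, trivial⟩
      field_simp
      try ring
    · obtain ⟨u, s⟩ := p
      simp only [Prod.mk.injEq]
      refine ⟨?_, trivial⟩
      field_simp
      try ring
    · obtain ⟨r, s⟩ := p
      simp only [Equiv.coe_fn_mk]
      constructor
      · intro h
        linear_combination (4 * (4 * e - 1)) * h
      · intro h
        apply mul_left_cancel₀ h4A
        linear_combination h
  -- Step 2: divide by the never-vanishing factor
  have E2 : {p : F × F // p.1 ^ 2 =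
        16 * (e * p.2 ^ 2 - p.2 + 1) ^ 2 * (e ^ 2 * p.2 ^ 2 - e * p.2 + (1 - 3 * e))} ≃
      {p : F × F // p.1 ^ 2 = e ^ 2 * p.2 ^ 2 - e * p.2 + (1 - 3 * e)} := by
    refine Equiv.subtypeEquiv
      ⟨fun p => (p.1 / (4 * (e * p.2 ^ 2 - p.2 + 1)), p.2),
       fun p => (4 * (e * p.2 ^ 2 - p.2 + 1) * p.1, p.2),
       fun p => ?_, fun p => ?_⟩ (fun p => ?_)
    · obtain ⟨u, s⟩ := p
      simp only [Prod.mk.injEq]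
      have := hd s
      refine ⟨?_, trivial⟩
      exact mul_div_cancel₀ u (mul_ne_zero h4 this)
    · obtain ⟨v, s⟩ := p
      simp only [Prod.mk.injEq]
      have := hd s
      refine ⟨?_, trivial⟩
      exact mul_div_cancel_left₀ v (mul_ne_zero h4 this)
    · obtain ⟨u, s⟩ := p
      simp only [Equiv.coe_fn_mk]
      have hds : (4 : F) * (e * s ^ 2 - s + 1) ≠ 0 := mul_ne_zero h4 (hd s)
      rw [div_pow, div_eq_iff (pow_ne_zero 2 hds)]
      constructor <;> intro h <;> linear_combination h
  -- Step 3: linear change to a hyperbola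
  have E3 : {p : F × F // p.1 ^ 2 = e ^ 2 * p.2 ^ 2 - e * p.2 + (1 - 3 * e)} ≃
      {p : F × F // p.1 * p.2 = 3 - 12 * e} := by
    refine Equiv.subtypeEquiv
      ⟨fun p => (2 * p.1 + 2 * e * p.2 - 1, 2 * p.1 - 2 * e * p.2 + 1),
       fun p => ((p.1 + p.2) / 4, (p.1 - p.2 + 2) / (4 * e)),
       fun p => ?_, fun p => ?_⟩ (fun p => ?_)
    · obtain ⟨v, s⟩ := p
      simp only [Prod.mk.injEq]
      refine ⟨?_, ?_⟩ <;> (field_simp; try ring)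
    · obtain ⟨x, y⟩ := p
      simp only [Prod.mk.injEq]
      refine ⟨?_, ?_⟩ <;> (field_simp; try ring)
    · obtain ⟨v, s⟩ := p
      simp only [Equiv.coe_fn_mk]
      constructor
      · intro h
        linear_combination 4 * h
      · intro h
        apply mul_left_cancel₀ h4
        linear_combination h
  -- Step 4: the hyperbola has q - 1 points
  have E4 : {p : F × F // p.1 * p.2 = 3 - 12 * e} ≃ {x : F // x ≠ 0} := by
    refine ⟨fun p => ⟨p.1.1, fun h => hc (by rw [← p.2, h, zero_mul])⟩,
       fun x => ⟨(x.1, (3 - 12 * e) / x.1), ?_⟩, fun p => ?_, fun x => rfl⟩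
    · obtain ⟨x, hx⟩ := x
      field_simp
    · obtain ⟨⟨x, y⟩, hp⟩ := p
      have hx : x ≠ 0 := fun h => hc (by rw [← hp, h, zero_mul])
      apply Subtype.ext
      simp only [Prod.mk.injEq]
      refine ⟨trivial, ?_⟩
      rw [div_eq_iff hx, ← hp]
      ring
  rw [Nat.card_congr (E1.trans ((E2.trans E3).trans E4))]
  rw [Nat.card_congr unitsEquivNeZero.symm, Nat.card_eq_fintype_card,
    Fintype.card_units, hcard]
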